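/- Fix α ∈ (0, 1] and set c_α = cos(απ/2), s_α = sin(απ/2). Define u_{α,x}(x) = 2(1 + c_α x^α)/(1 + 2c_α x^α + x^{2α}) and ψ_α(x) = (1 + 2c_α x^α + x^{2α})²·x^{1−3α}/(2 s_α α²) for x > 0. Then the product u_{α,xx}(x)·ψ_α(x) equals −(2x^{−α} + c_α(x^{−2α} + 1))/(s_α α), which is a monotonically increasing function of x on (0, ∞); consequently (d/dx)(u_{α,xx}·ψ_α) ≥ 0 on (0, ∞). -/

import Mathlib

open Real

noncomputable def uαx (α x : ℝ) : ℝ :=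
  2 * (1 + Real.cos (α * π / 2) * x ^ α) / (1 + 2 * Real.cos (α * π / 2) * x ^ α + x ^ (2 * α))

noncomputable def ψα (α x : ℝ) : ℝ :=
  (1 + 2 * Real.cos (α * π / 2) * x ^ α + x ^ (2 * α)) ^ 2 * x ^ (1 - 3 * α) /
    (2 * Real.sin (α * π / 2) * α ^ 2)

theorem damping_H1_alpha (α : ℝ) (hα : α ∈ Set.Ioc (0:ℝ) 1) :
    (∀ x : ℝ, 0 < x →
        deriv (uαx α) x * ψα α x
          = -(2 * x ^ (-α) + Real.cos (α * π / 2) * (x ^ (-(2 * α)) + 1)) /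
              (Real.sin (α * π / 2) * α)) ∧
    MonotoneOn (fun x => deriv (uαx α) x * ψα α x) (Set.Ioi 0) ∧
    ∀ x : ℝ, 0 < x → 0 ≤ deriv (fun y => deriv (uαx α) y * ψα α y) x := by
  obtain ⟨hα0, hα1⟩ := hα
  set c := Real.cos (α * π / 2) with hc
  set s := Real.sin (α * π / 2) with hs
  have hθ0 : 0 < α * π / 2 := by positivity
  have hθ1 : α * π / 2 ≤ π / 2 := by nlinarith [Real.pi_pos]
  have hs0 : 0 < s := Real.sin_pos_of_pos_of_lt_pi hθ0 (lt_of_le_of_lt hθ1 (by linarith [Real.pi_pos]))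
  have hc0 : 0 ≤ c := Real.cos_nonneg_of_mem_Icc ⟨by linarith, hθ1⟩
  -- main pointwise identity
  have key : ∀ x : ℝ, 0 < x →
      deriv (uαx α) x * ψα α x
        = -(2 * x ^ (-α) + c * (x ^ (-(2 * α)) + 1)) / (s * α) := by
    intro x hx
    have hX0 : 0 < x ^ α := Real.rpow_pos_of_pos hx α
    have hXa : HasDerivAt (fun y : ℝ => y ^ α) (α * x ^ (α - 1)) x :=
      Real.hasDerivAt_rpow_const (Or.inl hx.ne')
    have hX2 : HasDerivAt (fun y : ℝ => y ^ (2 * α)) ((2 * α) * x ^ (2 * α - 1)) x :=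
      Real.hasDerivAt_rpow_const (Or.inl hx.ne')
    have hN : HasDerivAt (fun y : ℝ => 2 * (1 + c * y ^ α)) (2 * (c * (α * x ^ (α - 1)))) x :=
      ((hXa.const_mul c).const_add 1).const_mul 2
    have hD : HasDerivAt (fun y : ℝ => 1 + 2 * c * y ^ α + y ^ (2 * α))
        ((2 * c) * (α * x ^ (α - 1)) + (2 * α) * x ^ (2 * α - 1)) x :=
      ((hXa.const_mul (2 * c)).const_add 1).add hX2
    have hDpos : ∀ y : ℝ, 0 < y → 0 < 1 + 2 * c * y ^ α + y ^ (2 * α) := by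
      intro y hy
      have h1 : 0 < y ^ α := Real.rpow_pos_of_pos hy α
      have h2 : 0 < y ^ (2 * α) := Real.rpow_pos_of_pos hy (2 * α)
      nlinarith
    have hDne : (1 + 2 * c * x ^ α + x ^ (2 * α)) ≠ 0 := (hDpos x hx).ne'
    have hu : HasDerivAt (uαx α)
        ((2 * (c * (α * x ^ (α - 1))) * (1 + 2 * c * x ^ α + x ^ (2 * α)) -
            2 * (1 + c * x ^ α) * ((2 * c) * (α * x ^ (α - 1)) + (2 * α) * x ^ (2 * α - 1))) /
          (1 + 2 * c * x ^ α + x ^ (2 * α)) ^ 2) x := by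
      have := hN.div hD hDne
      exact this
    rw [hu.deriv, ψα]
    have e2 : x ^ (2 * α) = (x ^ α) ^ 2 := by
      rw [show (2 : ℝ) * α = α + α by ring, Real.rpow_add hx, sq]
    have e1 : x ^ (α - 1) = x ^ α / x := by rw [Real.rpow_sub hx, Real.rpow_one]
    have e3 : x ^ (2 * α - 1) = (x ^ α) ^ 2 / x := by
      rw [Real.rpow_sub hx, Real.rpow_one, e2]
    have e4 : x ^ (1 - 3 * α) = x / (x ^ α) ^ 3 := by
      rw [Real.rpow_sub hx, Real.rpow_one, show (3 : ℝ) * α = α + α + α by ring,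
        Real.rpow_add hx, Real.rpow_add hx]
      ring
    have e5 : x ^ (-α) = (x ^ α)⁻¹ := by rw [Real.rpow_neg hx.le]
    have e6 : x ^ (-(2 * α)) = ((x ^ α) ^ 2)⁻¹ := by rw [Real.rpow_neg hx.le, e2]
    rw [e2, e1, e3, e4, e5, e6] at *
    set X := x ^ α with hXdef
    have hDne' : (1 + 2 * c * X + X ^ 2) ≠ 0 := by
      have h0 : (0:ℝ) < X := hX0
      have : (0:ℝ) < 1 + 2 * c * X + X ^ 2 := by nlinarith
      exact this.ne'
    rw [← hc, ← hs]
    field_simp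
    ring
  refine ⟨key, ?_, ?_⟩
  · -- monotonicity
    intro a ha b hb hab
    simp only [Set.mem_Ioi] at ha hb
    dsimp only
    rw [key a ha, key b hb]
    have hsα : 0 < s * α := mul_pos hs0 hα0
    rw [div_le_div_iff_of_pos_right hsα, neg_le_neg_iff]
    have h1 : b ^ (-α) ≤ a ^ (-α) := by
      rw [Real.rpow_neg ha.le, Real.rpow_neg hb.le]
      exact inv_anti₀ (Real.rpow_pos_of_pos ha α)
        (Real.rpow_le_rpow ha.le hab hα0.le)
    have h2 : b ^ (-(2 * α)) ≤ a ^ (-(2 * α)) := by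
      rw [Real.rpow_neg ha.le, Real.rpow_neg hb.le]
      exact inv_anti₀ (Real.rpow_pos_of_pos ha (2 * α))
        (Real.rpow_le_rpow ha.le hab (by positivity))
    nlinarith
  · -- derivative nonneg
    intro x hx
    have heq : (fun y => deriv (uαx α) y * ψα α y) =ᶠ[nhds x]
        (fun y => -(2 * y ^ (-α) + c * (y ^ (-(2 * α)) + 1)) / (s * α)) := by
      filter_upwards [isOpen_Ioi.mem_nhds (show x ∈ Set.Ioi (0:ℝ) from hx)] with y hy
      exact key y hy
    rw [heq.deriv_eq]
    have h1 : HasDerivAt (fun y : ℝ => y ^ (-α)) (-α * x ^ (-α - 1)) x :=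
      Real.hasDerivAt_rpow_const (Or.inl hx.ne')
    have h2 : HasDerivAt (fun y : ℝ => y ^ (-(2 * α))) (-(2 * α) * x ^ (-(2 * α) - 1)) x :=
      Real.hasDerivAt_rpow_const (Or.inl hx.ne')
    have hg : HasDerivAt (fun y : ℝ => -(2 * y ^ (-α) + c * (y ^ (-(2 * α)) + 1)) / (s * α))
        (-(2 * (-α * x ^ (-α - 1)) + c * (-(2 * α) * x ^ (-(2 * α) - 1))) / (s * α)) x := by
      exact (((h1.const_mul 2).add ((h2.add_const 1).const_mul c)).neg).div_const (s * α)
    rw [hg.deriv]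
    have p1 : 0 < x ^ (-α - 1) := Real.rpow_pos_of_pos hx _
    have p2 : 0 < x ^ (-(2 * α) - 1) := Real.rpow_pos_of_pos hx _
    have : 0 ≤ 2 * (α * x ^ (-α - 1)) + c * (2 * α * x ^ (-(2 * α) - 1)) := by positivity
    have hsα : 0 < s * α := mul_pos hs0 hα0
    apply div_nonneg _ hsα.le
    nlinarith
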